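/- Let R be a commutative ring, K and N free R-modules of ranks n and n-1 (n ≥ 2), m ≥ 1, S = S(K*), f : N × K^{m+1} → R multilinear, and define f_0 : N → S by f_0(x) = Σ f(x, a_{i_1},…,a_{i_{m+1}}) a_{i_1}*⋯a_{i_{m+1}}* over a basis {a_i} of K. If f_0 = 0, then with θ the (n-1)×n matrix over S given by θ_{i,j} = g(b_i, a_j) = Σ f(b_i, a_j, a_{i_1},…,a_{i_m}) a_{i_1}*⋯a_{i_m}*, there exists a unique d = d(f,a,b) ∈ S^{m(n-1)-1} such that det(θ(i)) = (-1)^i a_i* d for all 1 ≤ i ≤ n. Moreover d(f,a',b') = [a'/a][b'/b] d(f,a,b) for any other bases a', b'. -/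

import Mathlib

open MvPolynomial

/-- The embedding of `K*` into `S(K*) ≅ R[a_1*,…,a_n*]` (realized as
`MvPolynomial (Fin n) R`) determined by the basis `a`: `a_i* ↦ X i`. -/
noncomputable def dualToPoly {R K : Type*} [CommRing R] [AddCommGroup K] [Module R K]
    {n : ℕ} (a : Module.Basis (Fin n) R K) (φ : Module.Dual R K) : MvPolynomial (Fin n) R :=
  ∑ i : Fin n, MvPolynomial.C (φ (a i)) * MvPolynomial.X i

/-- The matrix `θ` of the Massey determinant construction, in the model of
`S(K*)` tied to the basis `a` of `K`:
`θ_{p,q} = g(b_p, a'_q) = ∑_{i_1,…,i_m} f(b_p, a'_q, a_{i_1},…,a_{i_m})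
a_{i_1}*⋯a_{i_m}*` (using basis independence of `g`, expanded over `a`). -/
noncomputable def masseyTheta {R K L : Type*} [CommRing R]
    [AddCommGroup K] [Module R K] [AddCommGroup L] [Module R L]
    {N M : ℕ} (a : Module.Basis (Fin (N + 2)) R K)
    (aK : Fin (N + 2) → K) (bL : Fin (N + 1) → L)
    (f : L →ₗ[R] MultilinearMap R (fun _ : Fin (M + 1 + 1) => K) R) :
    Matrix (Fin (N + 1)) (Fin (N + 2)) (MvPolynomial (Fin (N + 2)) R) :=
  Matrix.of fun p q =>
    ∑ idx : Fin (M + 1) → Fin (N + 2),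
      MvPolynomial.C (f (bL p) (Fin.cons (aK q) fun j => a (idx j)))
        * ∏ j : Fin (M + 1), MvPolynomial.X (idx j)


namespace MasseyAux

variable {S : Type*} [CommRing S]

lemma row_ext_det {n : ℕ} (θ : Matrix (Fin (n+1)) (Fin (n+2)) S) (w : Fin (n+2) → S) :
    (Matrix.of (Fin.cons w θ) : Matrix (Fin (n+2)) (Fin (n+2)) S).det
      = ∑ q : Fin (n+2), (-1)^(q:ℕ) * w q * ((θ.submatrix id q.succAbove).det) := by
  rw [Matrix.det_succ_row_zero]
  refine Finset.sum_congr rfl fun q _ => ?_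
  have h1 : (Matrix.of (Fin.cons w θ) : Matrix (Fin (n+2)) (Fin (n+2)) S).submatrix
      Fin.succ q.succAbove = θ.submatrix id q.succAbove := by
    ext p q'
    simp [Fin.cons_succ]
    rfl
  rw [h1]
  simp [Fin.cons_zero]
  rfl
end MasseyAux

namespace MasseyAux
variable {S : Type*} [CommRing S]

lemma cons_mat_zero {m k : ℕ} (w : Fin k → S) (θ : Matrix (Fin m) (Fin k) S) :
    (Fin.cons w θ : Fin (m+1) → Fin k → S) 0 = w := rfl

lemma cons_mat_succ {m k : ℕ} (w : Fin k → S) (θ : Matrix (Fin m) (Fin k) S) (p : Fin m) :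
    (Fin.cons w θ : Fin (m+1) → Fin k → S) p.succ = θ p := rfl

lemma minor_rel {n : ℕ} (θ : Matrix (Fin (n+1)) (Fin (n+2)) S) (v : Fin (n+2) → S)
    (hv : ∀ p, ∑ q, θ p q * v q = 0) (i j : Fin (n+2)) :
    v i * ((-1)^(j:ℕ) * (θ.submatrix id j.succAbove).det)
      = v j * ((-1)^(i:ℕ) * (θ.submatrix id i.succAbove).det) := by
  classical
  set A : Matrix (Fin (n+2)) (Fin (n+2)) S :=
    Matrix.of (Fin.cons (Pi.single j 1) θ) with hA
  set E : Matrix (Fin (n+2)) (Fin (n+2)) S := (1 : Matrix _ _ S).updateCol i v with hE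
  have hdetE : E.det = v i := by
    have h2 : Matrix.cramer (1 : Matrix (Fin (n+2)) (Fin (n+2)) S) v i = v i := by
      rw [Matrix.cramer_one]; simp
    rwa [Matrix.cramer_apply] at h2
  have hdetA : A.det = (-1)^(j:ℕ) * (θ.submatrix id j.succAbove).det := by
    rw [hA, row_ext_det, Finset.sum_eq_single j]
    · simp
    · intro q _ hq; simp [Pi.single_apply, hq]
    · simp
  have hAE : A * E = A.updateCol i (Fin.cons (v j) (0 : Fin (n+1) → S)) := by
    ext k l
    rw [Matrix.mul_apply]
    by_cases hl : l = i
    · subst hl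
      rw [Matrix.updateCol_self]
      have hEv : ∀ m, E m l = v m := fun m => Matrix.updateCol_self (j := l)
      simp_rw [hEv]
      refine Fin.cases ?_ (fun p => ?_) k
      · rw [Finset.sum_eq_single j]
        · simp [hA, Fin.cons_zero, cons_mat_zero]
        · intro q _ hq; simp [hA, Fin.cons_zero, cons_mat_zero, Pi.single_apply, hq]
        · simp
      · simp only [hA, Matrix.of_apply, Fin.cons_succ, cons_mat_succ]
        rw [hv p]
        simp
    · rw [Matrix.updateCol_ne hl]
      have hEo : ∀ m, E m l = if m = l then 1 else 0 := by
        intro m; rw [hE, Matrix.updateCol_ne hl, Matrix.one_apply]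
      simp_rw [hEo]
      rw [Finset.sum_eq_single l] <;> simp +contextual
  have hdetAE : (A * E).det = (-1)^(i:ℕ) * v j * (θ.submatrix id i.succAbove).det := by
    rw [hAE, Matrix.det_succ_column _ i, Fin.sum_univ_succ]
    have hzero : ∀ p : Fin (n+1),
        (A.updateCol i (Fin.cons (v j) (0 : Fin (n+1) → S))) p.succ i = 0 := by
      intro p; rw [Matrix.updateCol_self]; simp [Fin.cons_succ]
    have hsub : (A.updateCol i (Fin.cons (v j) (0 : Fin (n+1) → S))).submatrix
        (Fin.succAbove 0) i.succAbove = θ.submatrix id i.succAbove := by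
      ext p q'
      rw [Matrix.submatrix_apply, Fin.succAbove_zero,
        Matrix.updateCol_ne (Fin.succAbove_ne i q'), hA]
      simp [Fin.cons_succ, cons_mat_succ]
    simp_rw [hzero]
    rw [Matrix.updateCol_self, hsub]
    simp [Fin.cons_zero, mul_assoc]
  calc v i * ((-1)^(j:ℕ) * (θ.submatrix id j.succAbove).det)
      = A.det * E.det := by rw [hdetA, hdetE]; ring
    _ = (A * E).det := (Matrix.det_mul _ _).symm
    _ = v j * ((-1)^(i:ℕ) * (θ.submatrix id i.succAbove).det) := by rw [hdetAE]; ring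

end MasseyAux

namespace MasseyAux
variable {R : Type*} [CommRing R] {σ : Type*}

lemma X_dvd_of_coeff {i : σ} {p : MvPolynomial σ R}
    (h : ∀ m : σ →₀ ℕ, m i = 0 → coeff m p = 0) : X i ∣ p := by
  classical
  rw [MvPolynomial.X_dvd_iff_modMonomial_eq_zero]
  ext m
  rw [MvPolynomial.coeff_zero]
  by_cases hm : Finsupp.single i 1 ≤ m
  · exact MvPolynomial.coeff_modMonomial_of_le _ hm
  · rw [MvPolynomial.coeff_modMonomial_of_not_le _ hm]
    apply h
    by_contra hmi
    exact hm (by simp [Finsupp.single_le_iff, Nat.one_le_iff_ne_zero, hmi])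

lemma isHomogeneous_of_X_mul {i : σ} {p : MvPolynomial σ R} {k : ℕ}
    (h : (X i * p).IsHomogeneous (k + 1)) : p.IsHomogeneous k := by
  intro d hd
  have h1 : coeff (Finsupp.single i 1 + d) (X i * p) ≠ 0 := by
    rwa [MvPolynomial.coeff_X_mul]
  have h2 := h h1
  rw [map_add] at h2
  have h3 : (Finsupp.weight (1 : σ → ℕ)) (Finsupp.single i 1) = 1 := by
    rw [Finsupp.weight_apply, Finsupp.sum_single_index] <;> simp
  rw [h3] at h2
  omega

lemma det_isHomogeneous {n k : ℕ} (A : Matrix (Fin n) (Fin n) (MvPolynomial σ R))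
    (hA : ∀ p q, (A p q).IsHomogeneous k) : A.det.IsHomogeneous (n * k) := by
  rw [Matrix.det_apply']
  apply MvPolynomial.IsHomogeneous.sum
  intro τ _
  have h1 : (∏ q : Fin n, A (τ q) q).IsHomogeneous (n * k) := by
    have := MvPolynomial.IsHomogeneous.prod Finset.univ (fun q => A (τ q) q) (fun _ => k)
      (fun q _ => hA _ _)
    simpa [Finset.card_univ, mul_comm] using this
  have h2 : ((↑(Equiv.Perm.sign τ : ℤ) : MvPolynomial σ R)) = C ((Equiv.Perm.sign τ : ℤ) : R) := by
    rw [← map_intCast (C : R →+* MvPolynomial σ R)]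
  rw [h2]
  simpa using (MvPolynomial.isHomogeneous_C _ ((Equiv.Perm.sign τ : ℤ) : R)).mul h1

end MasseyAux

namespace MasseyAux

variable {R K L : Type*} [CommRing R] [AddCommGroup K] [Module R K]
  [AddCommGroup L] [Module R L] {N M : ℕ}

/-- The bilinear map `g(y,z) = ∑ f(y, z, a_{i_1},…,a_{i_m}) a*⋯a*`. -/
noncomputable def masseyG (a : Module.Basis (Fin (N + 2)) R K)
    (f : L →ₗ[R] MultilinearMap R (fun _ : Fin (M + 1 + 1) => K) R) :
    L →ₗ[R] K →ₗ[R] MvPolynomial (Fin (N + 2)) R :=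
  LinearMap.mk₂ R (fun y z => ∑ idx : Fin (M + 1) → Fin (N + 2),
      MvPolynomial.C (f y (Fin.cons z fun j => a (idx j)))
        * ∏ j : Fin (M + 1), MvPolynomial.X (idx j))
    (by
      intro y₁ y₂ z
      rw [← Finset.sum_add_distrib]
      refine Finset.sum_congr rfl fun idx _ => ?_
      rw [map_add, MultilinearMap.add_apply, map_add, add_mul])
    (by
      intro c y z
      rw [Finset.smul_sum]
      refine Finset.sum_congr rfl fun idx _ => ?_
      rw [map_smul, MultilinearMap.smul_apply, smul_eq_mul, map_mul,
        MvPolynomial.smul_eq_C_mul, mul_assoc])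
    (by
      intro y z₁ z₂
      rw [← Finset.sum_add_distrib]
      refine Finset.sum_congr rfl fun idx _ => ?_
      have h1 : ∀ z : K, (Fin.cons z (fun j => a (idx j)) : Fin (M+1+1) → K) =
          Function.update (Fin.cons (0:K) (fun j => a (idx j)) : Fin (M+1+1) → K) 0 z := fun z =>
        (Fin.update_cons_zero (α := fun _ : Fin (M+1+1) => K) (0:K) (fun j => a (idx j)) z).symm
      rw [h1 (z₁ + z₂), h1 z₁, h1 z₂, MultilinearMap.map_update_add, map_add, add_mul])
    (by
      intro c y z
      rw [Finset.smul_sum]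
      refine Finset.sum_congr rfl fun idx _ => ?_
      have h1 : ∀ z : K, (Fin.cons z (fun j => a (idx j)) : Fin (M+1+1) → K) =
          Function.update (Fin.cons (0:K) (fun j => a (idx j)) : Fin (M+1+1) → K) 0 z := fun z =>
        (Fin.update_cons_zero (α := fun _ : Fin (M+1+1) => K) (0:K) (fun j => a (idx j)) z).symm
      rw [h1 (c • z), h1 z, MultilinearMap.map_update_smul, smul_eq_mul, map_mul,
        MvPolynomial.smul_eq_C_mul, mul_assoc])

end MasseyAux

namespace MasseyAux
variable {R K L : Type*} [CommRing R] [AddCommGroup K] [Module R K]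
  [AddCommGroup L] [Module R L] {N M : ℕ}

lemma masseyG_apply (a : Module.Basis (Fin (N + 2)) R K)
    (f : L →ₗ[R] MultilinearMap R (fun _ : Fin (M + 1 + 1) => K) R) (y : L) (z : K) :
    masseyG a f y z = ∑ idx : Fin (M + 1) → Fin (N + 2),
      MvPolynomial.C (f y (Fin.cons z fun j => a (idx j)))
        * ∏ j : Fin (M + 1), MvPolynomial.X (idx j) := rfl

lemma sum_G_mul_X (a : Module.Basis (Fin (N + 2)) R K)
    (f : L →ₗ[R] MultilinearMap R (fun _ : Fin (M + 1 + 1) => K) R) (x : L)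
    (hx : ∑ idx : Fin (M + 1 + 1) → Fin (N + 2),
      MvPolynomial.C (f x fun j => a (idx j))
        * ∏ j : Fin (M + 1 + 1), MvPolynomial.X (idx j) = 0) :
    ∑ q : Fin (N + 2), masseyG a f x (a q) * MvPolynomial.X q = 0 := by
  rw [← hx, ← Fintype.sum_equiv (Fin.consEquiv fun _ => Fin (N + 2))
    (fun pr => MvPolynomial.C (f x fun j => a ((Fin.consEquiv fun _ => Fin (N+2)) pr j))
        * ∏ j : Fin (M + 1 + 1), MvPolynomial.X ((Fin.consEquiv fun _ => Fin (N+2)) pr j))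
    (fun idx => MvPolynomial.C (f x fun j => a (idx j))
        * ∏ j : Fin (M + 1 + 1), MvPolynomial.X (idx j)) (fun pr => rfl),
    Fintype.sum_prod_type]
  refine Finset.sum_congr rfl fun q _ => ?_
  rw [masseyG_apply, Finset.sum_mul]
  refine Finset.sum_congr rfl fun t _ => ?_
  have h1 : (fun j => a ((Fin.consEquiv fun _ => Fin (N+2)) (q, t) j))
      = Fin.cons (a q) (fun j => a (t j)) := by
    funext j
    refine Fin.cases ?_ (fun j' => ?_) j <;> simp [Fin.consEquiv]
  have h2 : (∏ j : Fin (M + 1 + 1), MvPolynomial.X (R := R)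
        ((Fin.consEquiv fun _ => Fin (N+2)) (q, t) j))
      = MvPolynomial.X q * ∏ j : Fin (M + 1), MvPolynomial.X (t j) := by
    rw [Fin.prod_univ_succ]
    simp [Fin.consEquiv]
  rw [h1, h2]
  ring

end MasseyAux

namespace MasseyAux
variable {R K L : Type*} [CommRing R] [AddCommGroup K] [Module R K]
  [AddCommGroup L] [Module R L] {N M : ℕ}

lemma masseyG_isHomogeneous (a : Module.Basis (Fin (N + 2)) R K)
    (f : L →ₗ[R] MultilinearMap R (fun _ : Fin (M + 1 + 1) => K) R) (y : L) (z : K) :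
    (masseyG a f y z).IsHomogeneous (M + 1) := by
  rw [masseyG_apply]
  apply MvPolynomial.IsHomogeneous.sum
  intro idx _
  have h1 : (∏ j : Fin (M + 1), MvPolynomial.X (R := R) (idx j)).IsHomogeneous (M + 1) := by
    have := MvPolynomial.IsHomogeneous.prod Finset.univ
      (fun j : Fin (M+1) => MvPolynomial.X (R := R) (idx j)) (fun _ => 1)
      (fun j _ => MvPolynomial.isHomogeneous_X R (idx j))
    simpa using this
  simpa using (MvPolynomial.isHomogeneous_C _ _).mul h1

lemma masseyG_expand (a : Module.Basis (Fin (N + 2)) R K)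
    (f : L →ₗ[R] MultilinearMap R (fun _ : Fin (M + 1 + 1) => K) R)
    (b0 : Module.Basis (Fin (N + 1)) R L) (y : L) (z : K) :
    masseyG a f y z = ∑ r : Fin (N + 1), ∑ s : Fin (N + 2),
      MvPolynomial.C (b0.repr y r) *
        (MvPolynomial.C (a.repr z s) * masseyG a f (b0 r) (a s)) := by
  have h1 : masseyG a f y = ∑ r : Fin (N + 1), (b0.repr y r) • masseyG a f (b0 r) := by
    conv_lhs => rw [← b0.sum_repr y]
    rw [map_sum]
    simp_rw [map_smul]
  have h2 : ∀ r : Fin (N + 1), masseyG a f (b0 r) z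
      = ∑ s : Fin (N + 2), (a.repr z s) • masseyG a f (b0 r) (a s) := by
    intro r
    conv_lhs => rw [← a.sum_repr z]
    rw [map_sum]
    simp_rw [map_smul]
  rw [h1, LinearMap.sum_apply]
  refine Finset.sum_congr rfl fun r _ => ?_
  rw [LinearMap.smul_apply, h2 r, Finset.smul_sum]
  refine Finset.sum_congr rfl fun s _ => ?_
  rw [MvPolynomial.smul_eq_C_mul, MvPolynomial.smul_eq_C_mul]

end MasseyAux

open MasseyAux in
/-- (Massey determinant, `n = N + 2 ≥ 2`, `m = M + 1 ≥ 1`.)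
`K, L` free of ranks `n`, `n-1`, `f : L × K^{m+1} → R` multilinear with
`f_0 = 0` (where `f_0(x) = ∑ f(x,a_{i_1},…,a_{i_{m+1}}) a_{i_1}*⋯a_{i_{m+1}}*`).
Then there is a unique `d = d(f,a,b) ∈ S^{m(n-1)-1}` with
`det θ(i) = (-1)^i a_i* d` for all `i` (0-based, whence `(-1)^(i+1)`; here
`a_i* = X i`), and moreover `d(f,a',b') = [a'/a][b'/b] d(f,a,b)` for any other
bases `a', b'`. -/
theorem massey_det_exists_unique_and_change_of_basis
    {R K L : Type*} [CommRing R] [IsDomain R]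
    [AddCommGroup K] [Module R K] [AddCommGroup L] [Module R L]
    {N M : ℕ}
    (a a' : Module.Basis (Fin (N + 2)) R K) (b b' : Module.Basis (Fin (N + 1)) R L)
    (f : L →ₗ[R] MultilinearMap R (fun _ : Fin (M + 1 + 1) => K) R)
    (hf0 : ∀ x : L,
      ∑ idx : Fin (M + 1 + 1) → Fin (N + 2),
        MvPolynomial.C (f x fun j => a (idx j))
          * ∏ j : Fin (M + 1 + 1), MvPolynomial.X (idx j) = 0) :
    (∃! d : MvPolynomial (Fin (N + 2)) R,
        d.IsHomogeneous ((M + 1) * (N + 1) - 1) ∧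
          ∀ i : Fin (N + 2),
            ((masseyTheta a a b f).submatrix id i.succAbove).det
              = (-1) ^ ((i : ℕ) + 1) * MvPolynomial.X i * d) ∧
      ∀ d d' : MvPolynomial (Fin (N + 2)) R,
        (∀ i : Fin (N + 2),
            ((masseyTheta a a b f).submatrix id i.succAbove).det
              = (-1) ^ ((i : ℕ) + 1) * MvPolynomial.X i * d) →
        (∀ i : Fin (N + 2),
            ((masseyTheta a a' b' f).submatrix id i.succAbove).det
              = (-1) ^ ((i : ℕ) + 1) * dualToPoly a (a'.dualBasis i) * d') →
        d' = MvPolynomial.C (a.toMatrix a').det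
              * MvPolynomial.C (b.toMatrix b').det * d := by
  classical
  set S := MvPolynomial (Fin (N + 2)) R with hS
  set θ : Matrix (Fin (N + 1)) (Fin (N + 2)) S := masseyTheta a a b f with hθdef
  set D : Fin (N + 2) → S := fun i => (θ.submatrix id i.succAbove).det with hDdef
  have hrow : ∀ p, ∑ q, θ p q * MvPolynomial.X q = 0 := fun p =>
    sum_G_mul_X a f (b p) (hf0 (b p))
  have key : ∀ i j : Fin (N + 2),
      MvPolynomial.X i * ((-1)^((j:ℕ)) * D j) = MvPolynomial.X j * ((-1)^((i:ℕ)) * D i) :=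
    fun i j => minor_rel θ MvPolynomial.X hrow i j
  have hX0 : (MvPolynomial.X (0 : Fin (N+2)) : S) ≠ 0 := MvPolynomial.X_ne_zero _
  -- divisibility
  have key10 : MvPolynomial.X (1 : Fin (N+2)) * D 0 = -(MvPolynomial.X (0 : Fin (N+2)) * D 1) := by
    have h := key 1 0
    simp only [Fin.val_zero, Fin.val_one, pow_zero, pow_one, one_mul] at h
    rw [h]; ring
  have hdvd : MvPolynomial.X (0 : Fin (N+2)) ∣ D 0 := by
    apply X_dvd_of_coeff
    intro m hm
    have h01 : (1 : Fin (N+2)) ≠ 0 := by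
      intro hcon
      have := congrArg Fin.val hcon
      simp [Fin.val_one, Fin.val_zero] at this
    have hc := congrArg (MvPolynomial.coeff (Finsupp.single (1 : Fin (N+2)) 1 + m)) key10
    rw [MvPolynomial.coeff_X_mul] at hc
    rw [MvPolynomial.coeff_neg, MvPolynomial.coeff_X_mul'] at hc
    have hnot : (0 : Fin (N+2)) ∉ (Finsupp.single (1 : Fin (N+2)) 1 + m).support := by
      simp [Finsupp.add_apply, Finsupp.single_apply, hm, h01.symm]
    rw [if_neg hnot] at hc
    simpa using hc
  obtain ⟨e, he⟩ := hdvd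
  set d0 : S := -e with hd0
  have hds : ∀ i : Fin (N + 2), D i = (-1)^((i:ℕ)+1) * MvPolynomial.X i * d0 := by
    intro i
    have h := key i 0
    simp only [Fin.val_zero, pow_zero, one_mul] at h
    rw [he] at h
    have h2 : MvPolynomial.X (0 : Fin (N+2)) * (MvPolynomial.X i * e)
        = MvPolynomial.X (0 : Fin (N+2)) * ((-1)^((i:ℕ)) * D i) := by
      rw [← h]; ring
    have h3 := mul_left_cancel₀ hX0 h2
    have hsq : ((-1 : S)^((i:ℕ))) * ((-1 : S)^((i:ℕ))) = 1 := by
      rw [← mul_pow]; norm_num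
    calc D i = (((-1 : S)^((i:ℕ))) * ((-1 : S)^((i:ℕ)))) * D i := by rw [hsq, one_mul]
      _ = (-1)^((i:ℕ)) * (MvPolynomial.X i * e) := by rw [mul_assoc, ← h3]
      _ = (-1)^((i:ℕ)+1) * MvPolynomial.X i * d0 := by rw [hd0, pow_succ]; ring
  have hcard : ((M + 1) * (N + 1) - 1) + 1 = (N+1) * (M+1) := by
    have h1 : 1 ≤ (M + 1) * (N + 1) := Nat.one_le_iff_ne_zero.mpr
      (Nat.mul_ne_zero (Nat.succ_ne_zero M) (Nat.succ_ne_zero N))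
    rw [Nat.sub_add_cancel h1, mul_comm]
  have hDhom : ∀ i : Fin (N+2), (D i).IsHomogeneous ((N+1) * (M+1)) := by
    intro i
    apply det_isHomogeneous
    intro p q
    exact masseyG_isHomogeneous a f (b p) (a (i.succAbove q))
  have hd0hom : d0.IsHomogeneous ((M + 1) * (N + 1) - 1) := by
    apply isHomogeneous_of_X_mul (i := (0 : Fin (N+2)))
    rw [hcard]
    have h0 : MvPolynomial.X (0 : Fin (N+2)) * d0 = -(D 0) := by
      rw [hds 0]; simp
    rw [h0]
    exact (hDhom 0).neg
  have huniq : ∀ y : S,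
      (∀ i : Fin (N + 2), D i = (-1)^((i:ℕ)+1) * MvPolynomial.X i * y) → y = d0 := by
    intro y hy
    have h1 := (hy 0).symm.trans (hds 0)
    simp only [Fin.val_zero, pow_one, zero_add] at h1
    have h2 : MvPolynomial.X (0 : Fin (N+2)) * y = MvPolynomial.X (0 : Fin (N+2)) * d0 := by
      linear_combination (-1 : S) * h1
    exact mul_left_cancel₀ hX0 h2
  constructor
  · exact ⟨d0, ⟨hd0hom, hds⟩, fun y hy => huniq y hy.2⟩
  · intro d d' hd hd'
    set θ' : Matrix (Fin (N + 1)) (Fin (N + 2)) S := masseyTheta a a' b' f with hθ'def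
    set mP : Matrix (Fin (N+1)) (Fin (N+1)) S :=
      Matrix.of fun p r => MvPolynomial.C (b.repr (b' p) r) with hmP
    set mQ : Matrix (Fin (N+2)) (Fin (N+2)) S :=
      Matrix.of fun s q => MvPolynomial.C (a.repr (a' q) s) with hmQ
    set Lq : Fin (N+2) → S := fun q => dualToPoly a (a'.dualBasis q) with hLqdef
    have hθ'fact : θ' = mP * θ * mQ := by
      refine Matrix.ext fun p q => ?_
      rw [Matrix.mul_apply]
      conv_rhs => arg 2; ext j; rw [Matrix.mul_apply, Finset.sum_mul]
      have h1 : θ' p q = masseyG a f (b' p) (a' q) := rfl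
      rw [h1, masseyG_expand a f b (b' p) (a' q), Finset.sum_comm]
      refine Finset.sum_congr rfl fun s _ => ?_
      refine Finset.sum_congr rfl fun r _ => ?_
      have hθrs : θ r s = masseyG a f (b r) (a s) := rfl
      rw [hθrs, hmP, hmQ]
      simp only [Matrix.of_apply]
      ring
    have hQL : ∀ k : Fin (N+2), ∑ q, mQ k q * Lq q = MvPolynomial.X k := by
      intro k
      calc ∑ q, mQ k q * Lq q
          = ∑ q, ∑ j, MvPolynomial.C (a.repr (a' q) k)
              * (MvPolynomial.C (a'.repr (a j) q) * MvPolynomial.X j) := by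
            refine Finset.sum_congr rfl fun q _ => ?_
            rw [hLqdef]
            show mQ k q * dualToPoly a (a'.dualBasis q) = _
            rw [dualToPoly, Finset.mul_sum]
            refine Finset.sum_congr rfl fun j _ => ?_
            rw [Module.Basis.dualBasis_apply, hmQ]
            simp only [Matrix.of_apply]
        _ = ∑ j, MvPolynomial.C (∑ q, a'.repr (a j) q * a.repr (a' q) k)
              * MvPolynomial.X j := by
            rw [Finset.sum_comm]
            refine Finset.sum_congr rfl fun j _ => ?_
            rw [map_sum, Finset.sum_mul]
            refine Finset.sum_congr rfl fun q _ => ?_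
            rw [MvPolynomial.C_mul]
            ring
        _ = MvPolynomial.X k := by
            have h2 : ∀ j, (∑ q, a'.repr (a j) q * a.repr (a' q) k)
                = if j = k then 1 else 0 := by
              intro j
              have h3 : a.repr (a j) k = ∑ q, a'.repr (a j) q * a.repr (a' q) k := by
                conv_lhs => rw [← a'.sum_repr (a j)]
                rw [map_sum, Finsupp.finset_sum_apply]
                refine Finset.sum_congr rfl fun q _ => ?_
                rw [map_smul, Finsupp.smul_apply, smul_eq_mul]
              rw [← h3, Module.Basis.repr_self, Finsupp.single_apply]
            simp_rw [h2]
            rw [Finset.sum_eq_single k]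
            · simp
            · intro j _ hj
              simp [hj]
            · simp
    set Phat : Matrix (Fin (N+2)) (Fin (N+2)) S :=
      Matrix.of (Fin.cons (Pi.single 0 1) (fun r => Fin.cons 0 (mP r))) with hPhat
    have hdetPhat : Phat.det = mP.det := by
      rw [Matrix.det_succ_row_zero, Finset.sum_eq_single 0]
      · have hsub : Phat.submatrix Fin.succ (Fin.succAbove 0) = mP := by
          ext r r'
          rw [Matrix.submatrix_apply, Fin.succAbove_zero, hPhat]
          simp [Fin.cons_succ]
        rw [hsub, hPhat]
        simp
      · intro q _ hq
        rw [hPhat]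
        simp [Fin.cons_zero, Pi.single_apply, hq.symm]
      · simp
    have hdetCk : ∀ k : Fin (N+2),
        (Matrix.of (Fin.cons (Pi.single k 1) θ) : Matrix (Fin (N+2)) (Fin (N+2)) S).det
          = (-1)^((k:ℕ)) * D k := by
      intro k
      rw [row_ext_det, Finset.sum_eq_single k]
      · simp [hDdef]
      · intro q _ hq
        simp [Pi.single_apply, hq]
      · simp
    have hBfact : ∀ k : Fin (N+2),
        (Matrix.of (Fin.cons (fun q => mQ k q) θ') : Matrix (Fin (N+2)) (Fin (N+2)) S)
          = Phat * (Matrix.of (Fin.cons (Pi.single k 1) θ)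
              : Matrix (Fin (N+2)) (Fin (N+2)) S) * mQ := by
      intro k
      refine Matrix.ext fun p q => ?_
      rw [Matrix.mul_apply]
      simp_rw [Matrix.mul_apply]
      refine Fin.cases ?_ (fun p' => ?_) p
      · have hin : ∀ s, (∑ m, Phat 0 m
            * (Matrix.of (Fin.cons (Pi.single k 1) θ)
              : Matrix (Fin (N+2)) (Fin (N+2)) S) m s) = Pi.single (M := fun _ => S) k 1 s := by
          intro s
          rw [Finset.sum_eq_single 0]
          · rw [hPhat]; simp [Fin.cons_zero, cons_mat_zero]
          · intro m _ hm
            rw [hPhat]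
            simp [Fin.cons_zero, Pi.single_apply, hm.symm]
          · simp
        simp_rw [hin]
        rw [Finset.sum_eq_single k]
        · simp [Fin.cons_zero, cons_mat_zero]
        · intro s _ hs
          simp [Pi.single_apply, hs]
        · simp
      · have hin : ∀ s, (∑ m, Phat p'.succ m
            * (Matrix.of (Fin.cons (Pi.single k 1) θ)
              : Matrix (Fin (N+2)) (Fin (N+2)) S) m s) = ∑ r', mP p' r' * θ r' s := by
          intro s
          rw [Fin.sum_univ_succ, hPhat]
          simp [Fin.cons_succ, Fin.cons_zero, cons_mat_succ]
        simp_rw [hin]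
        have hL : (Matrix.of (Fin.cons (fun q => mQ k q) θ')
            : Matrix (Fin (N+2)) (Fin (N+2)) S) p'.succ q = θ' p' q := by
          simp [Fin.cons_succ, cons_mat_succ]
        rw [hL, hθ'fact]
        rw [Matrix.mul_apply]
        simp_rw [Matrix.mul_apply]
    have hkey : ∀ k : Fin (N+2), MvPolynomial.X k * d'
        = MvPolynomial.X k * (mP.det * mQ.det * d) := by
      intro k
      have hB1 : (Matrix.of (Fin.cons (fun q => mQ k q) θ')
          : Matrix (Fin (N+2)) (Fin (N+2)) S).det = -(MvPolynomial.X k * d') := by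
        rw [row_ext_det, ← hQL k, Finset.sum_mul, ← Finset.sum_neg_distrib]
        refine Finset.sum_congr rfl fun q _ => ?_
        have hDq : (θ'.submatrix id q.succAbove).det
            = (-1)^((q:ℕ)+1) * Lq q * d' := hd' q
        rw [hDq, pow_succ]
        have hsq : ((-1 : S)^((q:ℕ))) * ((-1 : S)^((q:ℕ))) = 1 := by
          rw [← mul_pow]; norm_num
        linear_combination (-(mQ k q * Lq q * d')) * hsq
      have hB2 : (Matrix.of (Fin.cons (fun q => mQ k q) θ')
          : Matrix (Fin (N+2)) (Fin (N+2)) S).det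
          = -(MvPolynomial.X k * (mP.det * mQ.det * d)) := by
        rw [hBfact k, Matrix.det_mul, Matrix.det_mul, hdetPhat, hdetCk k]
        have hDk : D k = (-1)^((k:ℕ)+1) * MvPolynomial.X k * d := hd k
        rw [hDk, pow_succ]
        have hsq : ((-1 : S)^((k:ℕ))) * ((-1 : S)^((k:ℕ))) = 1 := by
          rw [← mul_pow]; norm_num
        linear_combination (-(mP.det * mQ.det * MvPolynomial.X k * d)) * hsq
      have := hB1.symm.trans hB2
      linear_combination -this
    have hPdet : mP.det = MvPolynomial.C (b.toMatrix b').det := by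
      rw [← Matrix.det_transpose mP]
      have hmPe : mP.transpose = (MvPolynomial.C : R →+* S).mapMatrix (b.toMatrix b') := by
        ext r p
        simp [hmP, Matrix.transpose_apply, RingHom.mapMatrix_apply, Matrix.map_apply,
          Module.Basis.toMatrix_apply]
      rw [hmPe, ← RingHom.map_det]
    have hQdet : mQ.det = MvPolynomial.C (a.toMatrix a').det := by
      have hmQe : mQ = (MvPolynomial.C : R →+* S).mapMatrix (a.toMatrix a') := by
        ext s q
        simp [hmQ, RingHom.mapMatrix_apply, Matrix.map_apply, Module.Basis.toMatrix_apply]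
      rw [hmQe, ← RingHom.map_det]
    have hfin := mul_left_cancel₀ hX0 (hkey 0)
    rw [hfin, hPdet, hQdet]
    ring
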